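/- Let x : [0,∞) → ℝ be continuously differentiable with x(0) = 0, x'(0) = 0, x' nonnegative and nondecreasing. Then for every T > 0, the Lebesgue measure of {t ∈ [0,T] : 1 ≤ x(t) ≤ 2} is at most the Lebesgue measure of {t ∈ [0,T] : 0 ≤ x(t) < 1}. Consequently (1/T)·meas{t ∈ [0,T] : x(t) ∉ [1,2]} ≥ 1/2. -/

import Mathlib

open MeasureTheory

theorem stmt12 (x : ℝ → ℝ) (hx : ContDiff ℝ 1 x)
    (hx0 : x 0 = 0) (hx'0 : deriv x 0 = 0)
    (hpos : ∀ t, 0 ≤ t → 0 ≤ deriv x t)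
    (hmono : MonotoneOn (deriv x) (Set.Ici 0))
    (T : ℝ) (hT : 0 < T) :
    volume {t ∈ Set.Icc 0 T | x t ∈ Set.Icc (1:ℝ) 2}
        ≤ volume {t ∈ Set.Icc 0 T | x t ∈ Set.Ico (0:ℝ) 1} ∧
    ENNReal.ofReal (T/2) ≤ volume {t ∈ Set.Icc 0 T | x t ∉ Set.Icc (1:ℝ) 2} := by
  have hcont : Continuous x := hx.continuous
  have hdiff : Differentiable ℝ x := hx.differentiable one_ne_zero
  have hmonX : MonotoneOn x (Set.Ici 0) := by
    apply monotoneOn_of_deriv_nonneg (convex_Ici 0) hcont.continuousOn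
      hdiff.differentiableOn
    intro t ht
    rw [interior_Ici] at ht
    exact hpos t ht.le
  have hconv : ConvexOn ℝ (Set.Ici 0) x := by
    apply MonotoneOn.convexOn_of_deriv (convex_Ici 0) hcont.continuousOn
      hdiff.differentiableOn
    rw [interior_Ici]
    exact hmono.mono Set.Ioi_subset_Ici_self
  set A := {t ∈ Set.Icc 0 T | x t ∈ Set.Icc (1:ℝ) 2} with hAdef
  set B := {t ∈ Set.Icc 0 T | x t ∈ Set.Ico (0:ℝ) 1} with hBdef
  have hAB : volume A ≤ volume B := by
    by_cases hS : ({t ∈ Set.Icc 0 T | 1 ≤ x t}).Nonempty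
    · set S := {t ∈ Set.Icc 0 T | 1 ≤ x t} with hSdef
      have hSclosed : IsClosed S := by
        have hSeq : S = Set.Icc 0 T ∩ x ⁻¹' Set.Ici 1 := by
          ext t; simp [hSdef, Set.mem_preimage]
        rw [hSeq]
        exact isClosed_Icc.inter (isClosed_Ici.preimage hcont)
      have hbdd : BddBelow S := ⟨0, fun t ht => ht.1.1⟩
      set a := sInf S with hadef
      have haS : a ∈ S := hSclosed.csInf_mem hS hbdd
      have ha0 : 0 ≤ a := haS.1.1
      have haT : a ≤ T := haS.1.2
      have hxa : 1 ≤ x a := haS.2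
      have hapos : 0 < a := by
        rcases ha0.lt_or_eq with h | h
        · exact h
        · exfalso
          rw [← h, hx0] at hxa
          linarith
      have hAsub : A ⊆ Set.Icc a (2 * a) := by
        intro t ht
        have hta : a ≤ t := csInf_le hbdd ⟨ht.1, ht.2.1⟩
        refine ⟨hta, ?_⟩
        rcases hta.lt_or_eq with hlt | heq
        · have hslope := hconv.slope_mono_adjacent (Set.self_mem_Ici)
            (Set.mem_Ici.mpr (le_trans ha0 hta)) hapos hlt
          rw [hx0] at hslope
          have hslope' : (x a - 0) * (t - a) ≤ (x t - x a) * (a - 0) := by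
            rw [div_le_div_iff₀ (by linarith) (by linarith)] at hslope
            linarith
          have hxt2 : x t ≤ 2 := ht.2.2
          nlinarith [hslope', hxa, hxt2, hlt]
        · linarith
      calc volume A ≤ volume (Set.Icc a (2 * a)) := measure_mono hAsub
        _ = ENNReal.ofReal (2 * a - a) := Real.volume_Icc
        _ = ENNReal.ofReal a := by ring_nf
        _ = volume (Set.Ico 0 a) := by rw [Real.volume_Ico, sub_zero]
        _ ≤ volume B := by
            apply measure_mono
            intro t ht
            refine ⟨⟨ht.1, le_trans ht.2.le haT⟩, ?_, ?_⟩
            · have := hmonX (Set.self_mem_Ici) (Set.mem_Ici.mpr ht.1) ht.1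
              rwa [hx0] at this
            · by_contra h
              push_neg at h
              have : t ∈ S := ⟨⟨ht.1, le_trans ht.2.le haT⟩, h⟩
              exact absurd (csInf_le hbdd this) (not_le.mpr ht.2)
    · rw [Set.not_nonempty_iff_eq_empty] at hS
      have hAempty : A ⊆ (∅ : Set ℝ) := by
        rw [← hS]
        exact fun t ht => ⟨ht.1, ht.2.1⟩
      rw [measure_mono_null hAempty measure_empty]
      exact zero_le
  refine ⟨hAB, ?_⟩
  set C := {t ∈ Set.Icc 0 T | x t ∉ Set.Icc (1:ℝ) 2} with hCdef
  have hBC : B ⊆ C := fun t ht => ⟨ht.1, fun hc => absurd ht.2.2 (not_lt.mpr hc.1)⟩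
  have hcover : Set.Icc (0:ℝ) T ⊆ A ∪ C := by
    intro t ht
    by_cases h : x t ∈ Set.Icc (1:ℝ) 2
    · exact Or.inl ⟨ht, h⟩
    · exact Or.inr ⟨ht, h⟩
  have h1 : ENNReal.ofReal T ≤ 2 * volume C := by
    calc ENNReal.ofReal T = volume (Set.Icc (0:ℝ) T) := by
          rw [Real.volume_Icc, sub_zero]
      _ ≤ volume (A ∪ C) := measure_mono hcover
      _ ≤ volume A + volume C := measure_union_le _ _
      _ ≤ volume C + volume C := add_le_add (le_trans hAB (measure_mono hBC)) le_rfl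
      _ = 2 * volume C := (two_mul _).symm
  have h2 : ENNReal.ofReal T = 2 * ENNReal.ofReal (T / 2) := by
    rw [two_mul, ← ENNReal.ofReal_add (by linarith) (by linarith)]
    norm_num
  exact (ENNReal.mul_le_mul_iff_right two_ne_zero ENNReal.ofNat_ne_top).mp (h2 ▸ h1)
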